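/- Let σ² > 0 and let x_i, x_j, x_k be points in a real inner product space with x_j ≠ x_i. For the Gaussian kernel K_{a,b} = exp(−‖x_a − x_b‖²/(2σ²)), the inequality K_{i,j}·K_{j,k} < K_{i,k} holds if and only if ⟨x_k − x_i, x_j − x_i⟩ < ‖x_j − x_i‖². Equivalently, the upper Kernel Ratio Interval condition K_{i,j}/K_{i,k} < 1/K_{j,k} holds if and only if the projection of x_k − x_i onto the direction x_j − x_i is strictly shorter than ‖x_j − x_i‖. -/

import Mathlib

open RealInnerProductSpace

/-- For the Gaussian kernel `K x y = exp (−‖x−y‖²/(2σ²))` with `x_j ≠ x_i`,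
the inequality `K_{i,j}·K_{j,k} < K_{i,k}` (equivalently, the upper Kernel
Ratio Interval condition `K_{i,j}/K_{i,k} < 1/K_{j,k}`) holds iff the
projection of `x_k − x_i` onto the direction `x_j − x_i` is strictly shorter
than `‖x_j − x_i‖`, i.e. `⟪x_k − x_i, x_j − x_i⟫ < ‖x_j − x_i‖²`. -/
theorem gaussian_kernel_upper_KRI_iff_projection
    {E : Type*} [NormedAddCommGroup E] [InnerProductSpace ℝ E]
    (σsq : ℝ) (hσ : 0 < σsq) (xi xj xk : E) (hji : xj ≠ xi)
    (K : E → E → ℝ) (hK : ∀ x y, K x y = Real.exp (-‖x - y‖ ^ 2 / (2 * σsq))) :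
    (K xi xj * K xj xk < K xi xk ↔ ⟪xk - xi, xj - xi⟫ < ‖xj - xi‖ ^ 2) ∧
    (K xi xj / K xi xk < 1 / K xj xk ↔ ⟪xk - xi, xj - xi⟫ < ‖xj - xi‖ ^ 2) := by
  have hpos : ∀ x y : E, 0 < K x y := fun x y => by rw [hK]; exact Real.exp_pos _
  have h2 : (0:ℝ) < 2 * σsq := by linarith
  have e1 : ‖xi - xj‖ = ‖xj - xi‖ := norm_sub_rev _ _
  have e2 : ‖xi - xk‖ = ‖xk - xi‖ := norm_sub_rev _ _
  have e3 : ‖xj - xk‖ = ‖(xk - xi) - (xj - xi)‖ := by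
    rw [← norm_neg]; congr 1; abel
  have e4 : ‖(xk - xi) - (xj - xi)‖ ^ 2
      = ‖xk - xi‖ ^ 2 - 2 * ⟪xk - xi, xj - xi⟫ + ‖xj - xi‖ ^ 2 := by
    simpa using @norm_sub_sq_real E _ _ (xk - xi) (xj - xi)
  have key : K xi xj * K xj xk < K xi xk ↔ ⟪xk - xi, xj - xi⟫ < ‖xj - xi‖ ^ 2 := by
    rw [hK, hK, hK, ← Real.exp_add, Real.exp_lt_exp, ← add_div,
      div_lt_div_iff_of_pos_right h2, e1, e2, e3, e4]
    constructor <;> intro h <;> nlinarith [sq_nonneg ‖xj - xi‖]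
  refine ⟨key, ?_⟩
  rw [div_lt_div_iff₀ (hpos xi xk) (hpos xj xk), one_mul]
  exact key
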